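/- Theorem 1 (trajectory form, asymptotic stabilization): In the setting of the previous statement (all LMI hypotheses: P ≻ 0, R ≻ 0, Hᵢ ≻ 0, existence of L with Yᵢ + LC_{di} + C_{di}ᵀLᵀ ≺ 0 for all i, and X_{di} + L_sC_{si} + C_{si}ᵀL_sᵀ ≺ 0 for all i with L_s having top block β·(all-ones) and bottom block −I), let α : [0,∞) → ℝᴺ be a function with αᵢ(t) ≥ 0 and Σᵢ αᵢ(t) = 1 for all t, and let x : [0,∞) → ℝⁿ be differentiable and π : [0,∞) → ℝ^{nπ}, y : [0,∞) → ℝᵖ, u : [0,∞) → ℝᵐ be functions satisfying for all t ≥ 0: x′(t) = A₁x(t) + A₂π(t) + A₃u(t), y(t) = C₁x(t) + C₂π(t), u(t) = −R⁻¹(Σᵢ αᵢ(t)Sᵢ)ᵀy(t), and Σᵢ αᵢ(t)(Υ_{1i}x(t) + Υ_{2i}π(t) + Υ_{3i}u(t)) = 0. Then x(t) → 0 as t → ∞. -/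

import Mathlib

open Matrix

private lemma dot_tr {k l : Type*} [Fintype k] [Fintype l]
    (M : Matrix k l ℝ) (u : l → ℝ) (v : k → ℝ) :
    u ⬝ᵥ (Mᵀ *ᵥ v) = (M *ᵥ u) ⬝ᵥ v := by
  rw [Matrix.dotProduct_mulVec, Matrix.vecMul_transpose]

private lemma quad_upper {k : ℕ} (M : Matrix (Fin k) (Fin k) ℝ) :
    ∃ C > 0, ∀ z : Fin k → ℝ, z ⬝ᵥ M *ᵥ z ≤ C * ‖z‖ ^ 2 := by
  refine ⟨(∑ i, ∑ j, |M i j|) + 1, by positivity, fun z => ?_⟩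
  have hzn : ∀ i, |z i| ≤ ‖z‖ := fun i => by simpa using norm_le_pi_norm z i
  calc z ⬝ᵥ M *ᵥ z = ∑ i, ∑ j, z i * (M i j * z j) := by
        simp [dotProduct, Matrix.mulVec, Finset.mul_sum]
    _ ≤ ∑ i, ∑ j, |M i j| * ‖z‖ ^ 2 := by
        refine Finset.sum_le_sum fun i _ => Finset.sum_le_sum fun j _ => ?_
        calc z i * (M i j * z j) ≤ |z i * (M i j * z j)| := le_abs_self _
          _ = |M i j| * (|z i| * |z j|) := by rw [abs_mul, abs_mul]; ring
          _ ≤ |M i j| * (‖z‖ * ‖z‖) := by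
              apply mul_le_mul_of_nonneg_left _ (abs_nonneg _)
              exact mul_le_mul (hzn i) (hzn j) (abs_nonneg _) (norm_nonneg _)
          _ = |M i j| * ‖z‖ ^ 2 := by ring
    _ = (∑ i, ∑ j, |M i j|) * ‖z‖ ^ 2 := by rw [Finset.sum_mul]; simp [Finset.sum_mul]
    _ ≤ _ := by nlinarith [sq_nonneg ‖z‖]

private lemma quad_lower {k : ℕ} (M : Matrix (Fin k) (Fin k) ℝ)
    (h : ∀ z : Fin k → ℝ, z ≠ 0 → 0 < z ⬝ᵥ M *ᵥ z) :
    ∃ c > 0, ∀ z : Fin k → ℝ, c * ‖z‖ ^ 2 ≤ z ⬝ᵥ M *ᵥ z := by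
  by_cases hk : ∀ z : Fin k → ℝ, z = 0
  · exact ⟨1, one_pos, fun z => by rw [hk z]; simp⟩
  push_neg at hk
  obtain ⟨z₀, hz₀⟩ := hk
  have hz₀n : ‖z₀‖ ≠ 0 := norm_ne_zero_iff.2 hz₀
  have hsph : (Metric.sphere (0 : Fin k → ℝ) 1).Nonempty := by
    refine ⟨‖z₀‖⁻¹ • z₀, ?_⟩
    simp [norm_smul, abs_of_nonneg (inv_nonneg.2 (norm_nonneg z₀)),
      inv_mul_cancel₀ hz₀n]
  have hcont : Continuous fun z : Fin k → ℝ => z ⬝ᵥ M *ᵥ z := by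
    show Continuous fun z : Fin k → ℝ => ∑ i, z i * ∑ j, M i j * z j
    apply continuous_finset_sum
    intro i _
    exact (continuous_apply i).mul
      (continuous_finset_sum _ fun j _ => continuous_const.mul (continuous_apply j))
  obtain ⟨w, hw, hmin⟩ := (isCompact_sphere (0 : Fin k → ℝ) 1).exists_isMinOn hsph
    hcont.continuousOn
  have hwne : w ≠ 0 := by
    intro h0
    rw [Metric.mem_sphere, dist_zero_right, h0] at hw
    simp at hw
  refine ⟨w ⬝ᵥ M *ᵥ w, h w hwne, fun z => ?_⟩
  rcases eq_or_ne z 0 with rfl | hz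
  · simp
  · have hnz : ‖z‖ ≠ 0 := norm_ne_zero_iff.2 hz
    have hmem : ‖z‖⁻¹ • z ∈ Metric.sphere (0 : Fin k → ℝ) 1 := by
      simp [norm_smul, abs_of_nonneg (inv_nonneg.2 (norm_nonneg z)), inv_mul_cancel₀ hnz]
    have hm := hmin hmem
    have hq : (‖z‖⁻¹ • z) ⬝ᵥ M *ᵥ (‖z‖⁻¹ • z) = ‖z‖⁻¹ * (‖z‖⁻¹ * (z ⬝ᵥ M *ᵥ z)) := by
      rw [Matrix.mulVec_smul, dotProduct_smul, smul_dotProduct]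
      simp [smul_eq_mul]
    have hm' : w ⬝ᵥ M *ᵥ w ≤ ‖z‖⁻¹ * (‖z‖⁻¹ * (z ⬝ᵥ M *ᵥ z)) := by
      have h3 : w ⬝ᵥ M *ᵥ w ≤ (‖z‖⁻¹ • z) ⬝ᵥ M *ᵥ (‖z‖⁻¹ • z) := hmin hmem
      rwa [hq] at h3
    have key := mul_le_mul_of_nonneg_right hm' (sq_nonneg ‖z‖)
    have heq : (‖z‖⁻¹ * (‖z‖⁻¹ * (z ⬝ᵥ M *ᵥ z))) * ‖z‖ ^ 2 = z ⬝ᵥ M *ᵥ z := by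
      have h4 : ‖z‖⁻¹ * ‖z‖ = 1 := inv_mul_cancel₀ hnz
      linear_combination (z ⬝ᵥ M *ᵥ z) * (‖z‖⁻¹ * ‖z‖ + 1) * h4
    rw [heq] at key
    exact key

private lemma decay {V Vd : ℝ → ℝ} {γ : ℝ} (hγ : 0 < γ)
    (hV : ∀ t, 0 ≤ t → HasDerivAt V (Vd t) t)
    (hle : ∀ t, 0 ≤ t → Vd t ≤ -γ * V t) :
    ∀ t, 0 ≤ t → V t ≤ V 0 * Real.exp (-γ * t) := by
  set g : ℝ → ℝ := fun t => V t * Real.exp (γ * t) with hg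
  have hgd : ∀ t, 0 ≤ t →
      HasDerivAt g (Vd t * Real.exp (γ * t) + V t * (γ * Real.exp (γ * t))) t := by
    intro t ht
    have he : HasDerivAt (fun s => Real.exp (γ * s)) (γ * Real.exp (γ * t)) t := by
      have := (Real.hasDerivAt_exp (γ * t)).comp t ((hasDerivAt_id t).const_mul γ)
      simpa [mul_comm, Function.comp_def] using this
    exact (hV t ht).mul he
  have hanti : AntitoneOn g (Set.Ici (0 : ℝ)) := by
    apply antitoneOn_of_deriv_nonpos (convex_Ici 0)
    · exact fun t ht => (hgd t ht).continuousAt.continuousWithinAt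
    · intro t ht
      rw [interior_Ici] at ht
      exact (hgd t (le_of_lt ht)).differentiableAt.differentiableWithinAt
    · intro t ht
      rw [interior_Ici] at ht
      rw [(hgd t ht.le).deriv]
      have h1 := hle t ht.le
      nlinarith [Real.exp_pos (γ * t)]
  intro t ht
  have hgle : g t ≤ g 0 := hanti Set.self_mem_Ici (Set.mem_Ici.2 ht) ht
  have hE : (0:ℝ) < Real.exp (γ * t) := Real.exp_pos _
  have h1 : V t * Real.exp (γ * t) ≤ V 0 := by simpa [hg] using hgle
  have h2 : V t ≤ V 0 / Real.exp (γ * t) := (le_div_iff₀ hE).2 h1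
  rw [neg_mul, Real.exp_neg, ← div_eq_mul_inv]
  exact h2

private lemma dot_sum {k ι : Type*} [Fintype k] (s : Finset ι) (v : k → ℝ) (w : ι → k → ℝ) :
    v ⬝ᵥ (∑ i ∈ s, w i) = ∑ i ∈ s, v ⬝ᵥ w i := by
  simp only [dotProduct, Finset.sum_apply, Finset.mul_sum]
  rw [Finset.sum_comm]

private lemma sum_dot {k ι : Type*} [Fintype k] (s : Finset ι) (v : k → ℝ) (w : ι → k → ℝ) :
    (∑ i ∈ s, w i) ⬝ᵥ v = ∑ i ∈ s, w i ⬝ᵥ v := by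
  simp only [dotProduct, Finset.sum_apply, Finset.sum_mul]
  rw [Finset.sum_comm]

private lemma vecMul_sum_smul {k l ι : Type*} [Fintype k] [Fintype l] (s : Finset ι)
    (c : ι → ℝ) (M : ι → Matrix k l ℝ) (v : k → ℝ) :
    v ᵥ* (∑ i ∈ s, c i • M i) = ∑ i ∈ s, c i • (v ᵥ* M i) := by
  ext j
  simp only [Matrix.vecMul, dotProduct, Finset.sum_apply, Finset.sum_mul,
    Matrix.sum_apply, Matrix.smul_apply, Pi.smul_apply, smul_eq_mul, Finset.mul_sum]
  rw [Finset.sum_comm]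
  apply Finset.sum_congr rfl
  intro i _
  apply Finset.sum_congr rfl
  intro b _
  ring

/-- A real matrix is negative definite (quadratic-form sense). -/
def NegDef {k : Type*} [Fintype k] (M : Matrix k k ℝ) : Prop :=
  ∀ z : k → ℝ, z ≠ 0 → z ⬝ᵥ M.mulVec z < 0

/-- Theorem 1 (trajectory form, asymptotic stabilization). -/
theorem gs_sof_asymptotic_stabilization (n nπ m p N : ℕ) (β : ℝ)
    (P : Matrix (Fin n) (Fin n) ℝ) (hPsymm : P.IsSymm)
    (hPpd : ∀ z : Fin n → ℝ, z ≠ 0 → 0 < z ⬝ᵥ P.mulVec z)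
    (R : Matrix (Fin m) (Fin m) ℝ) (hRsymm : R.IsSymm)
    (hRpd : ∀ z : Fin m → ℝ, z ≠ 0 → 0 < z ⬝ᵥ R.mulVec z)
    (H : Fin N → Matrix (Fin n) (Fin n) ℝ) (hHsymm : ∀ i, (H i).IsSymm)
    (hHpd : ∀ i, ∀ z : Fin n → ℝ, z ≠ 0 → 0 < z ⬝ᵥ (H i).mulVec z)
    (Q : Fin N → Matrix (Fin p) (Fin p) ℝ) (hQsymm : ∀ i, (Q i).IsSymm)
    (S : Fin N → Matrix (Fin p) (Fin m) ℝ)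
    (A₁ : Matrix (Fin n) (Fin n) ℝ) (A₂ : Matrix (Fin n) (Fin nπ) ℝ)
    (A₃ : Matrix (Fin n) (Fin m) ℝ)
    (C₁ : Matrix (Fin p) (Fin n) ℝ) (C₂ : Matrix (Fin p) (Fin nπ) ℝ)
    (Υ₁ : Fin N → Matrix (Fin nπ) (Fin n) ℝ)
    (Υ₂ : Fin N → Matrix (Fin nπ) (Fin nπ) ℝ)
    (Υ₃ : Fin N → Matrix (Fin nπ) (Fin m) ℝ)
    (Cd : Fin N → Matrix (Fin nπ) (Fin n ⊕ (Fin nπ ⊕ Fin m)) ℝ)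
    (hCd : ∀ i, Cd i = fromCols (Υ₁ i) (fromCols (Υ₂ i) (Υ₃ i)))
    (Y : Fin N → Matrix (Fin n ⊕ (Fin nπ ⊕ Fin m)) (Fin n ⊕ (Fin nπ ⊕ Fin m)) ℝ)
    (hY : ∀ i, Y i = fromBlocks
      (P * A₁ + A₁ᵀ * P - C₁ᵀ * Q i * C₁ + H i)
      (fromCols (P * A₂ - C₁ᵀ * Q i * C₂) (P * A₃ - C₁ᵀ * S i))
      (fromRows (P * A₂ - C₁ᵀ * Q i * C₂)ᵀ (P * A₃ - C₁ᵀ * S i)ᵀ)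
      (fromBlocks (-(C₂ᵀ * Q i * C₂)) (-(C₂ᵀ * S i)) (-(C₂ᵀ * S i))ᵀ (-R)))
    (Ls : Matrix (Fin p ⊕ Fin m) (Fin m) ℝ)
    (hLs : Ls = fromRows (Matrix.of fun _ _ => β) (-(1 : Matrix (Fin m) (Fin m) ℝ)))
    (hXd : ∀ i, NegDef (fromBlocks (Q i) (S i) (S i)ᵀ R
      + Ls * fromCols (S i)ᵀ R + (fromCols (S i)ᵀ R)ᵀ * Lsᵀ))
    (hLMI : ∃ L : Matrix (Fin n ⊕ (Fin nπ ⊕ Fin m)) (Fin nπ) ℝ,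
      ∀ i, NegDef (Y i + L * Cd i + (Cd i)ᵀ * Lᵀ))
    -- trajectories
    (α : ℝ → Fin N → ℝ)
    (hα : ∀ t, 0 ≤ t → (∀ i, 0 ≤ α t i) ∧ (∑ i, α t i) = 1)
    (x : ℝ → Fin n → ℝ) (piv : ℝ → Fin nπ → ℝ)
    (y : ℝ → Fin p → ℝ) (u : ℝ → Fin m → ℝ)
    (hode : ∀ t, 0 ≤ t → HasDerivAt x
      (A₁.mulVec (x t) + A₂.mulVec (piv t) + A₃.mulVec (u t)) t)
    (hy : ∀ t, 0 ≤ t → y t = C₁.mulVec (x t) + C₂.mulVec (piv t))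
    (hu : ∀ t, 0 ≤ t → u t = -((R⁻¹ * (∑ i, α t i • S i)ᵀ).mulVec (y t)))
    (halg : ∀ t, 0 ≤ t →
      (∑ i, α t i • ((Υ₁ i).mulVec (x t) + (Υ₂ i).mulVec (piv t)
        + (Υ₃ i).mulVec (u t))) = 0) :
    Filter.Tendsto x Filter.atTop (nhds 0) := by
  classical
  -- N is positive
  rcases Nat.eq_zero_or_pos N with hN | hN
  · exfalso
    have h1 := (hα 0 le_rfl).2
    subst hN
    simpa using h1
  haveI : Nonempty (Fin N) := Fin.pos_iff_nonempty.1 hN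
  obtain ⟨L, hL⟩ := hLMI
  obtain ⟨cP, hcP, hPl⟩ := quad_lower P hPpd
  obtain ⟨CP, hCP, hPu⟩ := quad_upper P
  choose cH hcH hHl using fun i => quad_lower (H i) (hHpd i)
  set c : ℝ := Finset.univ.inf' Finset.univ_nonempty cH with hc
  have hcpos : 0 < c := by
    rw [hc, Finset.lt_inf'_iff]
    exact fun i _ => hcH i
  have hcle : ∀ i, c ≤ cH i := fun i => Finset.inf'_le _ (Finset.mem_univ i)
  -- R is invertible
  have hRher : R.IsHermitian := by
    rw [Matrix.IsHermitian, Matrix.conjTranspose_eq_transpose_of_trivial]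
    exact hRsymm
  have hRpdM : R.PosDef := Matrix.PosDef.of_dotProduct_mulVec_pos hRher
    (fun z hz => by simpa using hRpd z hz)
  have hRinv : R * R⁻¹ = 1 := Matrix.mul_nonsing_inv R hRpdM.det_pos.ne'.isUnit
  -- the Lyapunov function and its derivative
  set xd : ℝ → Fin n → ℝ := fun t => A₁ *ᵥ x t + A₂ *ᵥ piv t + A₃ *ᵥ u t with hxd
  set V : ℝ → ℝ := fun t => x t ⬝ᵥ P *ᵥ x t with hV
  set Vd : ℝ → ℝ := fun t => xd t ⬝ᵥ P *ᵥ x t + x t ⬝ᵥ P *ᵥ xd t with hVd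
  have hVder : ∀ t, 0 ≤ t → HasDerivAt V (Vd t) t := by
    intro t ht
    have hx := hode t ht
    have hcoord : ∀ i, HasDerivAt (fun s => x s i) (xd t i) t := by
      intro i
      have := (ContinuousLinearMap.proj (R := ℝ) (φ := fun _ : Fin n => ℝ)
        i).hasFDerivAt.comp_hasDerivAt t hx
      simpa [hxd, Function.comp_def] using this
    have hsum : HasDerivAt (fun s => ∑ i, x s i * ∑ j, P i j * x s j)
        (∑ i, (xd t i * ∑ j, P i j * x t j + x t i * ∑ j, P i j * xd t j)) t := by
      apply HasDerivAt.fun_sum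
      intro i _
      exact (hcoord i).mul (HasDerivAt.fun_sum fun j _ => (hcoord j).const_mul (P i j))
    have hVfun : V = fun s => ∑ i, x s i * ∑ j, P i j * x s j := by
      funext s
      simp [hV, dotProduct, Matrix.mulVec]
    have hVdval : Vd t = ∑ i, (xd t i * ∑ j, P i j * x t j + x t i * ∑ j, P i j * xd t j) := by
      simp [hVd, dotProduct, Matrix.mulVec, Finset.sum_add_distrib, mul_comm]
    rw [hVfun, hVdval]
    exact hsum
  -- key derivative estimate
  have hkey : ∀ t, 0 ≤ t → Vd t ≤ -c * ‖x t‖ ^ 2 := by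
    intro t ht
    obtain ⟨hα0, hα1⟩ := hα t ht
    have hYvv := hy t ht
    have hUv := hu t ht
    have halg' := halg t ht
    have hxdval : xd t = A₁ *ᵥ x t + A₂ *ᵥ piv t + A₃ *ᵥ u t := rfl
    have hVdt : Vd t = xd t ⬝ᵥ P *ᵥ x t + x t ⬝ᵥ P *ᵥ xd t := rfl
    set a := α t with ha
    set X := x t with hXdef
    set Pv := piv t with hPvdef
    set U := u t with hUdef
    set Yv := y t with hYvdef
    set Sa : Matrix (Fin p) (Fin m) ℝ := ∑ i, a i • S i with hSadef
    set z : Fin n ⊕ (Fin nπ ⊕ Fin m) → ℝ := Sum.elim X (Sum.elim Pv U) with hzdef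
    set q : Fin m → ℝ := Saᵀ *ᵥ Yv with hqdef
    have hUq : U = -(R⁻¹ *ᵥ q) := by rw [hUv, ← Matrix.mulVec_mulVec]
    set D : ℝ := xd t ⬝ᵥ P *ᵥ X + X ⬝ᵥ P *ᵥ xd t with hD
    -- per-i expansion of the quadratic form of Y i
    have hid : ∀ i, z ⬝ᵥ Y i *ᵥ z =
        D - (Yv ⬝ᵥ Q i *ᵥ Yv + Yv ⬝ᵥ S i *ᵥ U + U ⬝ᵥ (S i)ᵀ *ᵥ Yv + U ⬝ᵥ R *ᵥ U)
          + X ⬝ᵥ H i *ᵥ X := by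
      intro i
      rw [hY i, hD, hxdval, hYvv, hzdef]
      simp only [Matrix.fromBlocks_mulVec, Sum.elim_comp_inl, Sum.elim_comp_inr,
        Matrix.fromCols_mulVec_sumElim, Matrix.fromRows_mulVec,
        Matrix.transpose_sub, Matrix.transpose_mul, Matrix.transpose_transpose,
        Matrix.transpose_neg, hPsymm.eq, (hQsymm i).eq,
        Matrix.add_mulVec, Matrix.sub_mulVec, Matrix.neg_mulVec, Matrix.mulVec_add,
        ← Matrix.mulVec_mulVec,
        sumElim_dotProduct_sumElim, dotProduct_add, add_dotProduct,
        dotProduct_neg, neg_dotProduct, dotProduct_sub,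
        sub_dotProduct, dot_tr]
      ring
    -- the algebraic constraint kills the L-cross terms
    have hzero : ∑ i, a i • (Cd i *ᵥ z) = 0 := by
      have hC : ∀ i, Cd i *ᵥ z = (Υ₁ i) *ᵥ X + ((Υ₂ i) *ᵥ Pv + (Υ₃ i) *ᵥ U) := by
        intro i
        rw [hCd i, hzdef]
        simp [Matrix.fromCols_mulVec_sumElim]
      simp only [hC, ← add_assoc]
      exact halg'
    have hSumY : ∑ i, a i * (z ⬝ᵥ Y i *ᵥ z) ≤ 0 := by
      have hcross : ∀ i, z ⬝ᵥ (Y i + L * Cd i + (Cd i)ᵀ * Lᵀ) *ᵥ z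
          = z ⬝ᵥ Y i *ᵥ z + 2 * ((z ᵥ* L) ⬝ᵥ (Cd i *ᵥ z)) := by
        intro i
        have e1 : z ⬝ᵥ (L * Cd i) *ᵥ z = (z ᵥ* L) ⬝ᵥ (Cd i *ᵥ z) := by
          rw [← Matrix.mulVec_mulVec, Matrix.dotProduct_mulVec]
        have e2 : z ⬝ᵥ ((Cd i)ᵀ * Lᵀ) *ᵥ z = (z ᵥ* L) ⬝ᵥ (Cd i *ᵥ z) := by
          rw [← Matrix.mulVec_mulVec, dot_tr, Matrix.mulVec_transpose,
            dotProduct_comm]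
        rw [Matrix.add_mulVec, Matrix.add_mulVec, dotProduct_add,
          dotProduct_add, e1, e2]
        ring
      have hterm : ∀ i ∈ Finset.univ,
          a i * (z ⬝ᵥ (Y i + L * Cd i + (Cd i)ᵀ * Lᵀ) *ᵥ z) ≤ 0 := by
        intro i _
        rcases eq_or_ne z 0 with hz0 | hz0
        · rw [hz0]; simp
        · exact mul_nonpos_of_nonneg_of_nonpos (hα0 i) (hL i z hz0).le
      have hsum2 : ∑ i, a i * ((z ᵥ* L) ⬝ᵥ (Cd i *ᵥ z)) = 0 := by
        have e3 : ∀ i, a i * ((z ᵥ* L) ⬝ᵥ (Cd i *ᵥ z))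
            = (z ᵥ* L) ⬝ᵥ (a i • (Cd i *ᵥ z)) := by
          intro i
          rw [dotProduct_smul, smul_eq_mul]
        simp only [e3]
        rw [← dot_sum, hzero, dotProduct_zero]
      have hsplit : ∑ i, a i * (z ⬝ᵥ Y i *ᵥ z)
          = (∑ i, a i * (z ⬝ᵥ (Y i + L * Cd i + (Cd i)ᵀ * Lᵀ) *ᵥ z))
            - 2 * ∑ i, a i * ((z ᵥ* L) ⬝ᵥ (Cd i *ᵥ z)) := by
        rw [Finset.mul_sum, ← Finset.sum_sub_distrib]
        apply Finset.sum_congr rfl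
        intro i _
        rw [hcross i]
        ring
      rw [hsplit, hsum2]
      have := Finset.sum_nonpos hterm
      linarith
    -- the secondary LMI controls the feedback term
    set E : Matrix (Fin p) (Fin m) ℝ := Matrix.of fun _ _ => β with hEdef
    set w : Fin m → ℝ := Eᵀ *ᵥ Yv with hwdef
    set ζ : Fin p ⊕ Fin m → ℝ := Sum.elim Yv w with hζdef
    have hζL : ζ ᵥ* Ls = 0 := by
      rw [hζdef, hLs, Matrix.sumElim_vecMul_fromRows, hwdef, Matrix.mulVec_transpose]
      simp [Matrix.vecMul_neg]
    have hζLT : Lsᵀ *ᵥ ζ = 0 := by rw [Matrix.mulVec_transpose, hζL]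
    have hMi : ∀ i, ζ ⬝ᵥ (fromBlocks (Q i) (S i) (S i)ᵀ R
        + Ls * fromCols (S i)ᵀ R + (fromCols (S i)ᵀ R)ᵀ * Lsᵀ) *ᵥ ζ
        = Yv ⬝ᵥ Q i *ᵥ Yv + Yv ⬝ᵥ S i *ᵥ w + w ⬝ᵥ (S i)ᵀ *ᵥ Yv + w ⬝ᵥ R *ᵥ w := by
      intro i
      have e1 : ζ ⬝ᵥ (Ls * fromCols (S i)ᵀ R) *ᵥ ζ = 0 := by
        rw [← Matrix.mulVec_mulVec, Matrix.dotProduct_mulVec, hζL,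
          zero_dotProduct]
      have e2 : ζ ⬝ᵥ ((fromCols (S i)ᵀ R)ᵀ * Lsᵀ) *ᵥ ζ = 0 := by
        rw [← Matrix.mulVec_mulVec, hζLT, Matrix.mulVec_zero, dotProduct_zero]
      have e0 : ζ ⬝ᵥ (fromBlocks (Q i) (S i) (S i)ᵀ R) *ᵥ ζ
          = Yv ⬝ᵥ Q i *ᵥ Yv + Yv ⬝ᵥ S i *ᵥ w + w ⬝ᵥ (S i)ᵀ *ᵥ Yv + w ⬝ᵥ R *ᵥ w := by
        conv_lhs => rw [hζdef]
        rw [Matrix.fromBlocks_mulVec]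
        simp only [Sum.elim_comp_inl, Sum.elim_comp_inr,
          sumElim_dotProduct_sumElim, dotProduct_add]
        ring
      rw [Matrix.add_mulVec, Matrix.add_mulVec, dotProduct_add,
        dotProduct_add, e0, e1, e2]
      ring
    have hT : ∑ i, a i * (ζ ⬝ᵥ (fromBlocks (Q i) (S i) (S i)ᵀ R
        + Ls * fromCols (S i)ᵀ R + (fromCols (S i)ᵀ R)ᵀ * Lsᵀ) *ᵥ ζ) ≤ 0 := by
      apply Finset.sum_nonpos
      intro i _
      rcases eq_or_ne ζ 0 with hz0 | hz0
      · rw [hz0]; simp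
      · exact mul_nonpos_of_nonneg_of_nonpos (hα0 i) (hXd i ζ hz0).le
    -- scalar linearity facts
    have hqw : ∀ v0 : Fin m → ℝ, ∑ i, a i * (Yv ⬝ᵥ S i *ᵥ v0) = q ⬝ᵥ v0 := by
      intro v0
      have e3 : ∀ i, a i * (Yv ⬝ᵥ S i *ᵥ v0) = (a i • (Yv ᵥ* S i)) ⬝ᵥ v0 := by
        intro i
        rw [Matrix.dotProduct_mulVec, smul_dotProduct, smul_eq_mul]
      simp only [e3]
      rw [← sum_dot]
      congr 1
      rw [hqdef, Matrix.mulVec_transpose, hSadef, vecMul_sum_smul]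
    have hwq : ∀ v0 : Fin m → ℝ, ∑ i, a i * (v0 ⬝ᵥ (S i)ᵀ *ᵥ Yv) = v0 ⬝ᵥ q := by
      intro v0
      have e3 : ∀ i, a i * (v0 ⬝ᵥ (S i)ᵀ *ᵥ Yv) = v0 ⬝ᵥ (a i • (Yv ᵥ* S i)) := by
        intro i
        rw [Matrix.mulVec_transpose, dotProduct_smul, smul_eq_mul]
      simp only [e3]
      rw [← dot_sum]
      congr 1
      rw [hqdef, Matrix.mulVec_transpose, hSadef, vecMul_sum_smul]
    -- R-algebra facts
    set r : Fin m → ℝ := R⁻¹ *ᵥ q with hrdef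
    have hRr : R *ᵥ r = q := by
      rw [hrdef, Matrix.mulVec_mulVec, hRinv, Matrix.one_mulVec]
    have hRsw : ∀ v0 w0 : Fin m → ℝ, v0 ⬝ᵥ R *ᵥ w0 = (R *ᵥ v0) ⬝ᵥ w0 := by
      intro v0 w0
      conv_lhs => rw [← hRsymm.eq]
      rw [dot_tr]
    -- the feedback quantity is nonpositive
    have hc2 : ∑ i, a i * (Yv ⬝ᵥ Q i *ᵥ Yv + Yv ⬝ᵥ S i *ᵥ U + U ⬝ᵥ (S i)ᵀ *ᵥ Yv
        + U ⬝ᵥ R *ᵥ U) ≤ 0 := by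
      set ρ : ℝ := (w + r) ⬝ᵥ R *ᵥ (w + r) with hρdef
      have hρ : 0 ≤ ρ := by
        rcases eq_or_ne (w + r) 0 with h0 | h0
        · rw [hρdef, h0]; simp
        · exact (hRpd _ h0).le
      have hUrw : U ⬝ᵥ R *ᵥ U = q ⬝ᵥ r := by
        rw [hUq, Matrix.mulVec_neg, dotProduct_neg, neg_dotProduct,
          neg_neg, hRsw, hRr, dotProduct_comm]
      have hwRw_exp : ρ = w ⬝ᵥ R *ᵥ w + w ⬝ᵥ q + q ⬝ᵥ w + q ⬝ᵥ r := by
        rw [hρdef, Matrix.mulVec_add, dotProduct_add, add_dotProduct,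
          add_dotProduct, hRr]
        have h5 : r ⬝ᵥ R *ᵥ w = q ⬝ᵥ w := by rw [hRsw, hRr]
        have h6 : r ⬝ᵥ q = q ⬝ᵥ r := dotProduct_comm _ _
        linarith
      have hκ : ∑ i, a i * (Yv ⬝ᵥ Q i *ᵥ Yv + Yv ⬝ᵥ S i *ᵥ U + U ⬝ᵥ (S i)ᵀ *ᵥ Yv
          + U ⬝ᵥ R *ᵥ U)
          = ∑ i, a i * (Yv ⬝ᵥ Q i *ᵥ Yv) + q ⬝ᵥ U + U ⬝ᵥ q + U ⬝ᵥ R *ᵥ U := by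
        have e4 : ∀ i, a i * (Yv ⬝ᵥ Q i *ᵥ Yv + Yv ⬝ᵥ S i *ᵥ U + U ⬝ᵥ (S i)ᵀ *ᵥ Yv
            + U ⬝ᵥ R *ᵥ U) = a i * (Yv ⬝ᵥ Q i *ᵥ Yv) + a i * (Yv ⬝ᵥ S i *ᵥ U)
            + a i * (U ⬝ᵥ (S i)ᵀ *ᵥ Yv) + a i * (U ⬝ᵥ R *ᵥ U) := by
          intro i; ring
        simp only [e4, Finset.sum_add_distrib]
        rw [hqw U, hwq U, ← Finset.sum_mul, hα1, one_mul]
      have hμ : ∑ i, a i * (Yv ⬝ᵥ Q i *ᵥ Yv + Yv ⬝ᵥ S i *ᵥ w + w ⬝ᵥ (S i)ᵀ *ᵥ Yv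
          + w ⬝ᵥ R *ᵥ w)
          = ∑ i, a i * (Yv ⬝ᵥ Q i *ᵥ Yv) + q ⬝ᵥ w + w ⬝ᵥ q + w ⬝ᵥ R *ᵥ w := by
        have e4 : ∀ i, a i * (Yv ⬝ᵥ Q i *ᵥ Yv + Yv ⬝ᵥ S i *ᵥ w + w ⬝ᵥ (S i)ᵀ *ᵥ Yv
            + w ⬝ᵥ R *ᵥ w) = a i * (Yv ⬝ᵥ Q i *ᵥ Yv) + a i * (Yv ⬝ᵥ S i *ᵥ w)
            + a i * (w ⬝ᵥ (S i)ᵀ *ᵥ Yv) + a i * (w ⬝ᵥ R *ᵥ w) := by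
          intro i; ring
        simp only [e4, Finset.sum_add_distrib]
        rw [hqw w, hwq w, ← Finset.sum_mul, hα1, one_mul]
      have hTμ : ∑ i, a i * (Yv ⬝ᵥ Q i *ᵥ Yv + Yv ⬝ᵥ S i *ᵥ w + w ⬝ᵥ (S i)ᵀ *ᵥ Yv
          + w ⬝ᵥ R *ᵥ w) ≤ 0 := by
        calc ∑ i, a i * (Yv ⬝ᵥ Q i *ᵥ Yv + Yv ⬝ᵥ S i *ᵥ w + w ⬝ᵥ (S i)ᵀ *ᵥ Yv
            + w ⬝ᵥ R *ᵥ w)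
            = ∑ i, a i * (ζ ⬝ᵥ (fromBlocks (Q i) (S i) (S i)ᵀ R
              + Ls * fromCols (S i)ᵀ R + (fromCols (S i)ᵀ R)ᵀ * Lsᵀ) *ᵥ ζ) := by
              apply Finset.sum_congr rfl
              intro i _
              rw [hMi i]
          _ ≤ 0 := hT
      have hqU : q ⬝ᵥ U = -(q ⬝ᵥ r) := by
        rw [hUq, dotProduct_neg]
      have hUq' : U ⬝ᵥ q = -(q ⬝ᵥ r) := by
        rw [hUq, neg_dotProduct, dotProduct_comm]
      rw [hκ, hqU, hUq', hUrw]
      rw [hμ] at hTμ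
      linarith
    -- the H term gives the norm bound
    have hHsum : c * ‖X‖ ^ 2 ≤ ∑ i, a i * (X ⬝ᵥ H i *ᵥ X) := by
      calc c * ‖X‖ ^ 2 = ∑ i, a i * (c * ‖X‖ ^ 2) := by
            rw [← Finset.sum_mul, hα1, one_mul]
        _ ≤ ∑ i, a i * (X ⬝ᵥ H i *ᵥ X) := by
            apply Finset.sum_le_sum
            intro i _
            apply mul_le_mul_of_nonneg_left _ (hα0 i)
            calc c * ‖X‖ ^ 2 ≤ cH i * ‖X‖ ^ 2 :=
                  mul_le_mul_of_nonneg_right (hcle i) (sq_nonneg _)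
              _ ≤ X ⬝ᵥ H i *ᵥ X := hHl i X
    -- assemble
    have hsuma : ∑ i, a i * (z ⬝ᵥ Y i *ᵥ z)
        = D - ∑ i, a i * (Yv ⬝ᵥ Q i *ᵥ Yv + Yv ⬝ᵥ S i *ᵥ U + U ⬝ᵥ (S i)ᵀ *ᵥ Yv
            + U ⬝ᵥ R *ᵥ U) + ∑ i, a i * (X ⬝ᵥ H i *ᵥ X) := by
      have e5 : ∀ i, a i * (z ⬝ᵥ Y i *ᵥ z)
          = a i * D - a i * (Yv ⬝ᵥ Q i *ᵥ Yv + Yv ⬝ᵥ S i *ᵥ U + U ⬝ᵥ (S i)ᵀ *ᵥ Yv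
            + U ⬝ᵥ R *ᵥ U) + a i * (X ⬝ᵥ H i *ᵥ X) := by
        intro i
        rw [hid i]
        ring
      simp only [e5]
      rw [Finset.sum_add_distrib, Finset.sum_sub_distrib, ← Finset.sum_mul, hα1, one_mul]
    have hDle : D ≤ -(c * ‖X‖ ^ 2) := by
      have h7 : D = ∑ i, a i * (z ⬝ᵥ Y i *ᵥ z)
          + ∑ i, a i * (Yv ⬝ᵥ Q i *ᵥ Yv + Yv ⬝ᵥ S i *ᵥ U + U ⬝ᵥ (S i)ᵀ *ᵥ Yv
            + U ⬝ᵥ R *ᵥ U) - ∑ i, a i * (X ⬝ᵥ H i *ᵥ X) := by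
        rw [hsuma]
        ring
      rw [h7]
      linarith
    rw [hVdt]
    have : xd t ⬝ᵥ P *ᵥ X + X ⬝ᵥ P *ᵥ xd t = D := hD.symm
    linarith [hDle]
  -- conclude via Gronwall-type decay
  set γ : ℝ := c / CP with hγdef
  have hγpos : 0 < γ := div_pos hcpos hCP
  have hle : ∀ t, 0 ≤ t → Vd t ≤ -γ * V t := by
    intro t ht
    have h1 := hkey t ht
    have h2 := hPu (x t)
    have h3 : -γ * V t ≥ -γ * (CP * ‖x t‖ ^ 2) := by
      apply mul_le_mul_of_nonpos_left h2
      simp [hγpos.le]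
    have : -γ * (CP * ‖x t‖ ^ 2) = -c * ‖x t‖ ^ 2 := by
      field_simp [hγdef]
      rw [hγdef, div_mul_cancel₀ c hCP.ne']; ring
    linarith
  have hdecay := decay hγpos hVder hle
  -- squeeze
  rw [tendsto_zero_iff_norm_tendsto_zero]
  have hsq : Filter.Tendsto (fun t => ‖x t‖ ^ 2) Filter.atTop (nhds 0) := by
    have hub : ∀ᶠ t in Filter.atTop, ‖x t‖ ^ 2 ≤ (V 0 / cP) * Real.exp (-γ * t) := by
      filter_upwards [Filter.eventually_ge_atTop (0 : ℝ)] with t ht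
      have h1 := hdecay t ht
      have h2 := hPl (x t)
      rw [div_mul_eq_mul_div, le_div_iff₀ hcP]
      nlinarith
    have hlb : ∀ᶠ t in Filter.atTop, 0 ≤ ‖x t‖ ^ 2 := by
      filter_upwards with t
      positivity
    have hexp : Filter.Tendsto (fun t => (V 0 / cP) * Real.exp (-γ * t))
        Filter.atTop (nhds 0) := by
      have h5 : Filter.Tendsto (fun t : ℝ => (V 0 / cP) * Real.exp (-γ * t))
          Filter.atTop (nhds ((V 0 / cP) * 0)) := by
        apply Filter.Tendsto.const_mul
        apply Real.tendsto_exp_atBot.comp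
        exact Filter.Tendsto.const_mul_atTop_of_neg (neg_lt_zero.2 hγpos) Filter.tendsto_id
      simpa using h5
    exact squeeze_zero' hlb hub hexp
  have : Filter.Tendsto (fun t => Real.sqrt (‖x t‖ ^ 2)) Filter.atTop (nhds 0) := by
    rw [show (0:ℝ) = Real.sqrt 0 by simp]
    exact (Real.continuous_sqrt.continuousAt).tendsto.comp hsq
  refine this.congr fun t => ?_
  rw [Real.sqrt_sq (norm_nonneg _)]
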